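/- Let (A_n) be a van Hove sequence, f, g ∈ L^∞(ℝ^d) with finite Besicovitch 2-seminorms. If the reflected Eberlein convolution ⟨f, g⟩ along (A_n) exists, then sup_x |⟨f, g⟩(x)| ≤ ‖f‖_{b,2} · ‖g‖_{b,2}, where ‖f‖_{b,2} = limsup_n ((1/vol(A_n)) ∫_{A_n} |f|²)^{1/2}. -/

import Mathlib

open MeasureTheory Filter
open scoped Pointwise

private lemma rpow_half_add_le {a b : ℝ} (ha : 0 ≤ a) (hb : 0 ≤ b) :
    (a + b) ^ ((1:ℝ)/2) ≤ a ^ ((1:ℝ)/2) + b ^ ((1:ℝ)/2) := by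
  rw [← Real.sqrt_eq_rpow, ← Real.sqrt_eq_rpow, ← Real.sqrt_eq_rpow]
  rw [show Real.sqrt a + Real.sqrt b = Real.sqrt ((Real.sqrt a + Real.sqrt b) ^ 2) from
    (Real.sqrt_sq (by positivity)).symm]
  apply Real.sqrt_le_sqrt
  nlinarith [Real.sq_sqrt ha, Real.sq_sqrt hb, Real.sqrt_nonneg a, Real.sqrt_nonneg b]

/-- Cauchy–Schwarz bound for the reflected Eberlein convolution: for a van Hove sequence
`(A n)` and essentially bounded `f, g` with finite Besicovitch 2-seminorms, if the
reflected Eberlein convolution `⟨f, g⟩` exists (with pointwise limit `h`), then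
`|h x| ≤ ‖f‖_{b,2} ‖g‖_{b,2}` for all `x`. -/
theorem reflected_Eberlein_Cauchy_Schwarz (d : ℕ)
    (A : ℕ → Set (EuclideanSpace ℝ (Fin d)))
    (hbdd : ∀ n, Bornology.IsBounded (A n))
    (hmeas : ∀ n, MeasurableSet (A n))
    (hpos : ∀ n, 0 < volume (A n))
    (hvH : ∀ K : Set (EuclideanSpace ℝ (Fin d)), IsCompact K →
      Tendsto (fun n =>
          volume (((K + A n) \ interior (A n)) ∪ (((-K) + closure ((A n)ᶜ)) ∩ A n)) /
            volume (A n))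
        atTop (nhds 0))
    (f g : EuclideanSpace ℝ (Fin d) → ℂ)
    (hf : MemLp f ⊤ volume) (hg : MemLp g ⊤ volume)
    (hfB : IsBoundedUnder (· ≤ ·) atTop (fun n =>
      ((volume (A n)).toReal⁻¹ * ∫ s in A n, ‖f s‖ ^ 2) ^ ((1 : ℝ) / 2)))
    (hgB : IsBoundedUnder (· ≤ ·) atTop (fun n =>
      ((volume (A n)).toReal⁻¹ * ∫ s in A n, ‖g s‖ ^ 2) ^ ((1 : ℝ) / 2)))
    (h : EuclideanSpace ℝ (Fin d) → ℂ)
    (hconv : ∀ x, Tendsto (fun n =>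
        (((volume (A n)).toReal⁻¹ : ℝ) : ℂ) *
          ∫ s in A n, f s * (starRingEnd ℂ) (g (s - x))) atTop (nhds (h x))) :
    ∀ x, ‖h x‖ ≤
      (limsup (fun n =>
          ((volume (A n)).toReal⁻¹ * ∫ s in A n, ‖f s‖ ^ 2) ^ ((1 : ℝ) / 2)) atTop) *
        (limsup (fun n =>
          ((volume (A n)).toReal⁻¹ * ∫ s in A n, ‖g s‖ ^ 2) ^ ((1 : ℝ) / 2)) atTop) := by
  intro x
  set F : ℕ → ℝ := fun n => ((volume (A n)).toReal⁻¹ * ∫ s in A n, ‖f s‖ ^ 2) ^ ((1 : ℝ) / 2)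
    with hFdef
  set G : ℕ → ℝ := fun n => ((volume (A n)).toReal⁻¹ * ∫ s in A n, ‖g s‖ ^ 2) ^ ((1 : ℝ) / 2)
    with hGdef
  set LF := limsup F atTop with hLF
  set LG := limsup G atTop with hLG
  have hVfin : ∀ n, volume (A n) < ⊤ := fun n => (hbdd n).measure_lt_top
  have hVpos : ∀ n, 0 < (volume (A n)).toReal :=
    fun n => ENNReal.toReal_pos (hpos n).ne' (hVfin n).ne
  have hVinv : ∀ n, (0:ℝ) ≤ (volume (A n)).toReal⁻¹ := fun n => inv_nonneg.2 (hVpos n).le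
  -- the essential bound on g
  set Cg : ℝ := (eLpNormEssSup g volume).toReal with hCgdef
  have hCg0 : 0 ≤ Cg := ENNReal.toReal_nonneg
  have hess : eLpNormEssSup g volume ≠ ⊤ := by
    have := hg.2; rwa [eLpNorm_exponent_top, lt_top_iff_ne_top] at this
  have hCg : ∀ᵐ t : EuclideanSpace ℝ (Fin d), ‖g t‖ ≤ Cg := by
    filter_upwards [ae_le_eLpNormEssSup (f := g) (μ := volume)] with t ht
    have := ENNReal.toReal_mono hess ht
    simpa using this
  -- nonnegativity of the seminorm sequences and limsups
  have hFnn : ∀ n, 0 ≤ F n := fun n =>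
    Real.rpow_nonneg (mul_nonneg (hVinv n) (integral_nonneg fun s => by positivity)) _
  have hGnn : ∀ n, 0 ≤ G n := fun n =>
    Real.rpow_nonneg (mul_nonneg (hVinv n) (integral_nonneg fun s => by positivity)) _
  have hLF0 : 0 ≤ LF :=
    le_limsup_of_frequently_le (Frequently.of_forall hFnn) hfB
  have hLG0 : 0 ≤ LG :=
    le_limsup_of_frequently_le (Frequently.of_forall hGnn) hgB
  -- Cauchy–Schwarz step
  have key : ∀ n,
      ‖(((volume (A n)).toReal⁻¹ : ℝ) : ℂ) * ∫ s in A n, f s * (starRingEnd ℂ) (g (s - x))‖ ≤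
        F n * ((volume (A n)).toReal⁻¹ * ∫ s in A n, ‖g (s - x)‖ ^ 2) ^ ((1 : ℝ) / 2) := by
    intro n
    set T := A n
    have hTfin := hVfin n
    haveI : IsFiniteMeasure (volume.restrict T) := ⟨by rwa [Measure.restrict_apply_univ]⟩
    have hf2 : MemLp f (ENNReal.ofReal 2) (volume.restrict T) :=
      (hf.restrict T).mono_exponent le_top
    have hg2 : MemLp (fun s => g (s - x)) (ENNReal.ofReal 2) (volume.restrict T) :=
      ((hg.comp_measurePreserving
        (measurePreserving_sub_right volume x)).restrict T).mono_exponent le_top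
    have hpq : Real.HolderConjugate 2 2 := Real.HolderConjugate.two_two
    have hCS := integral_mul_norm_le_Lp_mul_Lq hpq hf2 hg2
    have h2 : ∀ y : ℝ, y ^ (2:ℝ) = y ^ (2:ℕ) := fun y => by
      rw [show (2:ℝ) = ((2:ℕ):ℝ) by norm_num, Real.rpow_natCast]
    simp only [h2] at hCS
    have hfnn : (0:ℝ) ≤ ∫ s in T, ‖f s‖ ^ 2 := integral_nonneg fun s => by positivity
    have hgnn : (0:ℝ) ≤ ∫ s in T, ‖g (s - x)‖ ^ 2 := integral_nonneg fun s => by positivity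
    calc ‖(((volume T).toReal⁻¹ : ℝ) : ℂ) * ∫ s in T, f s * (starRingEnd ℂ) (g (s - x))‖
        = (volume T).toReal⁻¹ * ‖∫ s in T, f s * (starRingEnd ℂ) (g (s - x))‖ := by
          rw [norm_mul, Complex.norm_real, Real.norm_eq_abs, abs_of_nonneg (hVinv n)]
      _ ≤ (volume T).toReal⁻¹ * ∫ s in T, ‖f s‖ * ‖g (s - x)‖ := by
          refine mul_le_mul_of_nonneg_left ?_ (hVinv n)
          refine (norm_integral_le_integral_norm _).trans_eq ?_
          refine integral_congr_ae (Filter.Eventually.of_forall fun s => ?_)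
          simp [norm_mul]
      _ ≤ (volume T).toReal⁻¹ *
          ((∫ s in T, ‖f s‖ ^ 2) ^ ((1:ℝ)/2) * (∫ s in T, ‖g (s - x)‖ ^ 2) ^ ((1:ℝ)/2)) :=
          mul_le_mul_of_nonneg_left hCS (hVinv n)
      _ = F n * ((volume T).toReal⁻¹ * ∫ s in T, ‖g (s - x)‖ ^ 2) ^ ((1 : ℝ) / 2) := by
          simp only [hFdef]
          rw [Real.mul_rpow (hVinv n) hfnn, Real.mul_rpow (hVinv n) hgnn]
          have hh : (volume T).toReal⁻¹ ^ ((1:ℝ)/2) * (volume T).toReal⁻¹ ^ ((1:ℝ)/2)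
              = (volume T).toReal⁻¹ := by
            rw [← Real.rpow_add (inv_pos.2 (hVpos n))]; norm_num; rfl
          calc (volume T).toReal⁻¹ *
              ((∫ s in T, ‖f s‖ ^ 2) ^ ((1:ℝ)/2) * (∫ s in T, ‖g (s - x)‖ ^ 2) ^ ((1:ℝ)/2))
              = ((volume T).toReal⁻¹ ^ ((1:ℝ)/2) * (volume T).toReal⁻¹ ^ ((1:ℝ)/2)) *
                ((∫ s in T, ‖f s‖ ^ 2) ^ ((1:ℝ)/2) *
                  (∫ s in T, ‖g (s - x)‖ ^ 2) ^ ((1:ℝ)/2)) := by rw [hh]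
            _ = _ := by ring
  -- the van Hove error sets
  set K : Set (EuclideanSpace ℝ (Fin d)) := {x, -x} with hKdef
  set S : ℕ → Set (EuclideanSpace ℝ (Fin d)) :=
    fun n => ((K + A n) \ interior (A n)) ∪ (((-K) + closure ((A n)ᶜ)) ∩ A n) with hSdef
  have hKc : IsCompact K := (Set.toFinite K).isCompact
  have hSfin : ∀ n, volume (S n) < ⊤ := by
    intro n
    refine Bornology.IsBounded.measure_lt_top ?_
    refine Bornology.IsBounded.union ?_ ((hbdd n).subset Set.inter_subset_right)
    refine Bornology.IsBounded.subset ?_ Set.diff_subset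
    exact ((Set.toFinite K).isBounded).add (hbdd n)
  -- translation estimate
  have trans : ∀ n, ∫ s in A n, ‖g (s - x)‖ ^ 2 ≤
      (∫ s in A n, ‖g s‖ ^ 2) + Cg ^ 2 * (volume (S n)).toReal := by
    intro n
    have hTm := hmeas n
    have hTb := hbdd n
    have hTfin := hVfin n
    set B : Set (EuclideanSpace ℝ (Fin d)) := (fun t => t + x) ⁻¹' (A n) with hB
    have hBm : MeasurableSet B := (measurable_add_const x) hTm
    have hBvol : volume B = volume (A n) :=
      (measurePreserving_add_right volume x).measure_preimage hTm.nullMeasurableSet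
    have step1 : ∫ s in A n, ‖g (s - x)‖ ^ 2 = ∫ t in B, ‖g t‖ ^ 2 := by
      have hAB : A n = (fun s => s - x) ⁻¹' B := by
        ext s; simp [hB, sub_add_cancel]
      rw [hAB]
      exact (measurePreserving_sub_right volume x).setIntegral_preimage_emb
        ((MeasurableEquiv.subRight x).measurableEmbedding) (fun t => ‖g t‖ ^ 2) B
    have aesm : AEStronglyMeasurable (fun t => ‖g t‖ ^ 2) volume := by
      exact (continuous_pow 2).comp_aestronglyMeasurable hg.1.norm
    have hint : ∀ U : Set (EuclideanSpace ℝ (Fin d)), volume U < ⊤ →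
        IntegrableOn (fun t => ‖g t‖ ^ 2) U volume := by
      intro U hUfin
      haveI : IsFiniteMeasure (volume.restrict U) :=
        ⟨by rwa [Measure.restrict_apply_univ]⟩
      refine Integrable.mono' (integrable_const (Cg ^ 2)) aesm.restrict ?_
      filter_upwards [ae_restrict_of_ae hCg] with t ht
      rw [Real.norm_eq_abs, abs_of_nonneg (by positivity)]
      exact pow_le_pow_left₀ (norm_nonneg _) ht 2
    set D : Set (EuclideanSpace ℝ (Fin d)) := B \ A n with hD
    have hDm : MeasurableSet D := hBm.diff hTm
    have hDfin : volume D < ⊤ := lt_of_le_of_lt (measure_mono Set.diff_subset) (hBvol ▸ hTfin)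
    have hDS : D ⊆ S n := by
      rintro t ⟨htB, htT⟩
      refine Set.mem_union_left _ ⟨?_, fun hti => htT (interior_subset hti)⟩
      refine Set.mem_add.2 ⟨-x, ?_, t + x, htB, by abel⟩
      simp [hKdef]
    have step2 : ∫ t in B, ‖g t‖ ^ 2 ≤ ∫ t in A n ∪ D, ‖g t‖ ^ 2 := by
      refine setIntegral_mono_set (hint _ ?_)
        (Filter.Eventually.of_forall fun t => by positivity) ?_
      · exact lt_of_le_of_lt (measure_union_le _ _) (ENNReal.add_lt_top.2 ⟨hTfin, hDfin⟩)
      · exact Filter.Eventually.of_forall fun t ht =>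
          (em (t ∈ A n)).elim (fun h' => Set.mem_union_left _ h')
            (fun h' => Set.mem_union_right _ ⟨ht, h'⟩)
    have step3 : ∫ t in A n ∪ D, ‖g t‖ ^ 2 = (∫ t in A n, ‖g t‖ ^ 2) + ∫ t in D, ‖g t‖ ^ 2 :=
      setIntegral_union disjoint_sdiff_self_right hDm (hint _ hTfin) (hint _ hDfin)
    have step4 : ∫ t in D, ‖g t‖ ^ 2 ≤ Cg ^ 2 * (volume (S n)).toReal := by
      have hb := norm_setIntegral_le_of_norm_le_const_ae' (f := fun t => ‖g t‖ ^ 2)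
        (C := Cg ^ 2) hDfin ?_
      · rw [Real.norm_eq_abs] at hb
        have h1 : ∫ t in D, ‖g t‖ ^ 2 ≤ Cg ^ 2 * (volume D).toReal :=
          le_trans (le_abs_self _) hb
        have h2 := ENNReal.toReal_mono (hSfin n).ne (measure_mono hDS)
        nlinarith [ENNReal.toReal_nonneg (a := volume D)]
      · filter_upwards [hCg] with t ht _
        rw [Real.norm_eq_abs, abs_of_nonneg (by positivity)]
        exact pow_le_pow_left₀ (norm_nonneg _) ht 2
    calc ∫ s in A n, ‖g (s - x)‖ ^ 2 = ∫ t in B, ‖g t‖ ^ 2 := step1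
      _ ≤ ∫ t in A n ∪ D, ‖g t‖ ^ 2 := step2
      _ = (∫ t in A n, ‖g t‖ ^ 2) + ∫ t in D, ‖g t‖ ^ 2 := step3
      _ ≤ _ := by linarith
  -- the error term tends to zero
  set t : ℕ → ℝ := fun n => Cg ^ 2 * ((volume (S n)).toReal / (volume (A n)).toReal) with htdef
  have htnn : ∀ n, 0 ≤ t n := fun n => by positivity
  have ht0 : Tendsto t atTop (nhds 0) := by
    have h0 := hvH K hKc
    have h1 : Tendsto (fun n => (volume (S n) / volume (A n)).toReal) atTop (nhds 0) := by
      have := (ENNReal.tendsto_toReal (by simp : (0:ENNReal) ≠ ⊤)).comp h0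
      simpa only [Function.comp_def, ENNReal.toReal_zero] using this
    have h2 : Tendsto (fun n => Cg ^ 2 * (volume (S n) / volume (A n)).toReal)
        atTop (nhds 0) := by
      simpa using h1.const_mul (Cg ^ 2)
    refine h2.congr fun n => ?_
    rw [ENNReal.toReal_div]
  -- for every ε > 0 the bound holds
  have main : ∀ ε : ℝ, 0 < ε → ‖h x‖ ≤ (LF + ε) * (LG + 2 * ε) := by
    intro ε hε
    have hF : ∀ᶠ n in atTop, F n < LF + ε :=
      eventually_lt_of_limsup_lt (by linarith [le_refl LF]) hfB
    have hG : ∀ᶠ n in atTop, G n < LG + ε :=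
      eventually_lt_of_limsup_lt (by linarith [le_refl LG]) hgB
    have hte : ∀ᶠ n in atTop, t n < ε ^ 2 := ht0.eventually_lt_const (by positivity)
    have hbound : ∀ᶠ n in atTop,
        ‖(((volume (A n)).toReal⁻¹ : ℝ) : ℂ) *
          ∫ s in A n, f s * (starRingEnd ℂ) (g (s - x))‖ ≤ (LF + ε) * (LG + 2 * ε) := by
      filter_upwards [hF, hG, hte] with n h1 h2 h3
      have hb : (volume (A n)).toReal⁻¹ * ∫ s in A n, ‖g (s - x)‖ ^ 2 ≤
          ((volume (A n)).toReal⁻¹ * ∫ s in A n, ‖g s‖ ^ 2) + t n := by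
        have := mul_le_mul_of_nonneg_left (trans n) (hVinv n)
        rw [htdef]
        calc (volume (A n)).toReal⁻¹ * ∫ s in A n, ‖g (s - x)‖ ^ 2
            ≤ (volume (A n)).toReal⁻¹ *
              ((∫ s in A n, ‖g s‖ ^ 2) + Cg ^ 2 * (volume (S n)).toReal) := this
          _ = ((volume (A n)).toReal⁻¹ * ∫ s in A n, ‖g s‖ ^ 2) +
              Cg ^ 2 * ((volume (S n)).toReal / (volume (A n)).toReal) := by
            rw [div_eq_mul_inv]; ring
      have hbnn : (0:ℝ) ≤ (volume (A n)).toReal⁻¹ * ∫ s in A n, ‖g (s - x)‖ ^ 2 :=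
        mul_nonneg (hVinv n) (integral_nonneg fun s => by positivity)
      have hann : (0:ℝ) ≤ (volume (A n)).toReal⁻¹ * ∫ s in A n, ‖g s‖ ^ 2 :=
        mul_nonneg (hVinv n) (integral_nonneg fun s => by positivity)
      have hsqrt : ((volume (A n)).toReal⁻¹ * ∫ s in A n, ‖g (s - x)‖ ^ 2) ^ ((1:ℝ)/2) ≤
          G n + ε := by
        calc ((volume (A n)).toReal⁻¹ * ∫ s in A n, ‖g (s - x)‖ ^ 2) ^ ((1:ℝ)/2)
            ≤ (((volume (A n)).toReal⁻¹ * ∫ s in A n, ‖g s‖ ^ 2) + t n) ^ ((1:ℝ)/2) :=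
              Real.rpow_le_rpow hbnn hb (by norm_num)
          _ ≤ G n + (t n) ^ ((1:ℝ)/2) := rpow_half_add_le hann (htnn n)
          _ ≤ G n + ε := by
              have : (t n) ^ ((1:ℝ)/2) ≤ ε := by
                rw [← Real.sqrt_eq_rpow]
                have := Real.sqrt_le_sqrt h3.le
                rwa [Real.sqrt_sq hε.le] at this
              linarith
      calc ‖(((volume (A n)).toReal⁻¹ : ℝ) : ℂ) *
            ∫ s in A n, f s * (starRingEnd ℂ) (g (s - x))‖
          ≤ F n * ((volume (A n)).toReal⁻¹ * ∫ s in A n, ‖g (s - x)‖ ^ 2) ^ ((1:ℝ)/2) := key n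
        _ ≤ (LF + ε) * (LG + 2 * ε) := by
            refine mul_le_mul h1.le ?_ (Real.rpow_nonneg hbnn _) (by linarith)
            calc ((volume (A n)).toReal⁻¹ * ∫ s in A n, ‖g (s - x)‖ ^ 2) ^ ((1:ℝ)/2)
                ≤ G n + ε := hsqrt
              _ ≤ LG + 2 * ε := by linarith
    exact le_of_tendsto (hconv x).norm hbound
  -- let ε → 0
  have hlim : Tendsto (fun ε : ℝ => (LF + ε) * (LG + 2 * ε)) (nhdsWithin 0 (Set.Ioi 0))
      (nhds (LF * LG)) := by
    have hc : Continuous (fun ε : ℝ => (LF + ε) * (LG + 2 * ε)) :=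
      Continuous.mul (continuous_const.add continuous_id')
        (continuous_const.add (continuous_const.mul continuous_id'))
    have := hc.tendsto (0:ℝ)
    simp only [add_zero, mul_zero] at this
    exact this.mono_left nhdsWithin_le_nhds
  refine ge_of_tendsto hlim ?_
  filter_upwards [self_mem_nhdsWithin] with ε hε
  exact main ε hε
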